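/- Let A ∈ ℚ^{n×n} be invertible. Then the indices a = [ℤ^n[A] : Aℤ^n[A]] and b = [ℤ^n[A^{−1}] : A^{−1}ℤ^n[A^{−1}]] are both finite, and |det A| = a / b. -/

import Mathlib

open Matrix

/-- `ℤ^n[M] = ⋃_{k≥1} (ℤ^n + Mℤ^n + ⋯ + M^{k-1}ℤ^n)`, the additive subgroup of `ℚ^n`
generated by all vectors `M^j z` with `z ∈ ℤ^n`. -/
def intSpan (n : ℕ) (M : Matrix (Fin n) (Fin n) ℚ) : AddSubgroup (Fin n → ℚ) :=
  AddSubgroup.closure {x | ∃ (j : ℕ) (z : Fin n → ℤ), x = (M ^ j) *ᵥ fun i => (z i : ℚ)}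

/-- The index `[ℤ^n[M] : Mℤ^n[M]]` of the additive subgroup `Mℤ^n[M]` in `ℤ^n[M]`. -/
noncomputable def idx (n : ℕ) (M : Matrix (Fin n) (Fin n) ℚ) : ℕ :=
  ((intSpan n M).map (Matrix.mulVecLin M).toAddMonoidHom).relIndex (intSpan n M)

theorem mulVecLin_int_injective {n : ℕ} (B : Matrix (Fin n) (Fin n) ℤ) (hB : B.det ≠ 0) :
    Function.Injective B.mulVecLin := by
  rw [injective_iff_map_eq_zero]
  intro x hx
  have h : B.adjugate *ᵥ (B *ᵥ x) = 0 := by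
    simp only [mulVecLin_apply] at hx
    rw [hx, mulVec_zero]
  rw [mulVec_mulVec, adjugate_mul, smul_mulVec, one_mulVec] at h
  ext i
  have := congrFun h i
  simp only [Pi.smul_apply, smul_eq_mul, Pi.zero_apply] at this
  exact (mul_eq_zero.mp this).resolve_left hB

theorem index_range_mulVecLin {n : ℕ} (B : Matrix (Fin n) (Fin n) ℤ) (hB : B.det ≠ 0) :
    (LinearMap.range B.mulVecLin).toAddSubgroup.index = B.det.natAbs := by
  classical
  have hinj := mulVecLin_int_injective B hB
  set N := LinearMap.range B.mulVecLin with hN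
  let e : (Fin n → ℤ) ≃ₗ[ℤ] N := LinearEquiv.ofInjective _ hinj
  obtain ⟨m, snf⟩ := N.smithNormalForm (Pi.basisFun ℤ (Fin n))
  have hm : m = n := by
    have h1 : Module.finrank ℤ N = m := by
      rw [Module.finrank_eq_card_basis snf.bN, Fintype.card_fin]
    have h2 : Module.finrank ℤ N = n := by
      rw [← e.finrank_eq, Module.finrank_pi, Fintype.card_fin]
    omega
  subst hm
  -- index side
  have hidx : N.toAddSubgroup.index = ∏ i, (snf.a i).natAbs := by
    rw [snf.toAddSubgroup_index_eq_ite]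
    simp [Ideal.span_singleton_toAddSubgroup_eq_zmultiples, Int.index_zmultiples]
  rw [hidx]
  -- det side
  set bM := snf.bM with hbM
  let e₂ : (Fin m → ℤ) ≃ₗ[ℤ] N := (bM.equiv snf.bN (Equiv.refl _))
  have hdet1 : (N.subtype ∘ₗ (e : (Fin m → ℤ) →ₗ[ℤ] N)) = B.mulVecLin := by
    refine LinearMap.ext fun x => ?_
    show (↑(LinearEquiv.ofInjective B.mulVecLin hinj x) : Fin m → ℤ) = B.mulVecLin x
    exact LinearEquiv.ofInjective_apply (h := hinj) B.mulVecLin x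
  have hassoc := LinearMap.associated_det_comp_equiv N.subtype e e₂
  rw [hdet1] at hassoc
  have hd2 : LinearMap.det B.mulVecLin = B.det := by
    rw [← Matrix.toLin'_apply', LinearMap.det_toLin']
  have hnat : B.det.natAbs = (LinearMap.det (N.subtype ∘ₗ (e₂ : (Fin m → ℤ) →ₗ[ℤ] N))).natAbs := by
    rw [← hd2]; exact Int.natAbs_eq_iff_associated.mpr hassoc
  rw [hnat]
  -- compute det of e₂ composite
  let σ : Equiv.Perm (Fin m) :=
    Equiv.ofBijective snf.f (Finite.injective_iff_bijective.mp snf.f.injective)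
  have hσ : ∀ j, σ j = snf.f j := fun j => rfl
  have hmat : LinearMap.toMatrix bM bM (N.subtype ∘ₗ (e₂ : (Fin m → ℤ) →ₗ[ℤ] N)) =
      fun i => (Matrix.diagonal snf.a) (σ.symm i) := by
    ext i j
    rw [LinearMap.toMatrix_apply]
    simp only [LinearMap.coe_comp, Function.comp_apply, LinearEquiv.coe_coe, e₂,
      Module.Basis.equiv_apply, Equiv.refl_apply, Submodule.coe_subtype]
    rw [snf.snf j, _root_.map_smul, Module.Basis.repr_self, Finsupp.smul_single, smul_eq_mul, mul_one,
      Finsupp.single_apply, Matrix.diagonal_apply]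
    by_cases h : (Equiv.symm σ) i = j
    · have hij : snf.f j = i := by rw [← h]; exact σ.apply_symm_apply i
      rw [if_pos hij, if_pos h, h]
    · have hij : snf.f j ≠ i := by
        intro hc
        exact h (by rw [← hc, ← hσ, σ.symm_apply_apply])
      rw [if_neg hij, if_neg h]
  have : LinearMap.det (N.subtype ∘ₗ (e₂ : (Fin m → ℤ) →ₗ[ℤ] N)) =
      Equiv.Perm.sign σ.symm * ∏ i, snf.a i := by
    rw [← LinearMap.det_toMatrix bM, hmat]
    have hsub : (fun i => diagonal snf.a ((Equiv.symm σ) i)) =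
        (diagonal snf.a).submatrix (⇑(Equiv.symm σ)) id := rfl
    rw [hsub, Matrix.det_permute, Matrix.det_diagonal]
    push_cast
    ring
  rw [this]
  rw [Int.natAbs_mul, Int.units_natAbs, one_mul]
  exact (map_prod Int.natAbsHom _ _).symm
open Matrix

namespace IdxAux
variable {n : ℕ}

/-- coordinatewise cast ℤ^n →+ ℚ^n -/
def castHom (n : ℕ) : (Fin n → ℤ) →+ (Fin n → ℚ) :=
  AddMonoidHom.mk' (fun z i => (z i : ℚ)) (by intro a b; funext i; simp)

lemma castHom_injective (n : ℕ) : Function.Injective (castHom n) := by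
  intro a b h
  funext i
  have := congrFun h i
  simpa [castHom] using this

/-- the standard lattice ℤ^n inside ℚ^n -/
def P (n : ℕ) : AddSubgroup (Fin n → ℚ) := (castHom n).range

/-- matrix action as additive hom -/
def T (M : Matrix (Fin n) (Fin n) ℚ) : (Fin n → ℚ) →+ (Fin n → ℚ) :=
  M.mulVecLin.toAddMonoidHom

lemma T_apply (M : Matrix (Fin n) (Fin n) ℚ) (x : Fin n → ℚ) : T M x = M *ᵥ x := rfl

lemma T_one : T (1 : Matrix (Fin n) (Fin n) ℚ) = AddMonoidHom.id _ :=
  AddMonoidHom.ext fun x => by simp [T_apply]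

lemma map_T_one (X : AddSubgroup (Fin n → ℚ)) : X.map (T 1) = X := by
  rw [T_one, AddSubgroup.map_id]

lemma map_T_mul (M N : Matrix (Fin n) (Fin n) ℚ) (X : AddSubgroup (Fin n → ℚ)) :
    X.map (T (M * N)) = (X.map (T N)).map (T M) := by
  rw [AddSubgroup.map_map]
  congr 1
  exact AddMonoidHom.ext fun x => by simp [T_apply, AddMonoidHom.comp_apply, mulVec_mulVec]

lemma T_injective {M : Matrix (Fin n) (Fin n) ℚ} (hM : IsUnit M.det) :
    Function.Injective (T M) := by
  intro a b h
  have h2 := congrArg (fun v => M⁻¹ *ᵥ v) h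
  simpa [T_apply, mulVec_mulVec, nonsing_inv_mul M hM] using h2

lemma relindex_map_of_injective {G G' : Type*} [AddGroup G] [AddGroup G'] (f : G →+ G')
    (hf : Function.Injective f) (X Y : AddSubgroup G) :
    (X.map f).relIndex (Y.map f) = X.relIndex Y := by
  rw [← AddSubgroup.relIndex_comap,
    AddSubgroup.comap_map_eq_self (((AddMonoidHom.ker_eq_bot_iff f).mpr hf) ▸ bot_le)]

lemma relindex_map_T {M : Matrix (Fin n) (Fin n) ℚ} (hM : IsUnit M.det)
    (X Y : AddSubgroup (Fin n → ℚ)) :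
    (X.map (T M)).relIndex (Y.map (T M)) = X.relIndex Y :=
  relindex_map_of_injective _ (T_injective hM) X Y

lemma cast_mulVec (B : Matrix (Fin n) (Fin n) ℤ) (z : Fin n → ℤ) :
    (B.map (Int.cast : ℤ → ℚ)) *ᵥ (castHom n z) = castHom n (B *ᵥ z) := by
  funext i
  simp only [castHom, AddMonoidHom.mk'_apply, mulVec, dotProduct, Matrix.map_apply]
  push_cast
  rfl

lemma map_T_int_le (B : Matrix (Fin n) (Fin n) ℤ) :
    (P n).map (T (B.map (Int.cast : ℤ → ℚ))) ≤ P n := by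
  rintro x ⟨y, ⟨z, rfl⟩, rfl⟩
  exact ⟨B *ᵥ z, (cast_mulVec B z).symm⟩


lemma P_eq_map_top : P n = AddSubgroup.map (castHom n) ⊤ := AddMonoidHom.range_eq_map (castHom n)

lemma map_T_int_eq (B : Matrix (Fin n) (Fin n) ℤ) :
    (P n).map (T (B.map (Int.cast : ℤ → ℚ))) =
      AddSubgroup.map (castHom n) ((LinearMap.range B.mulVecLin).toAddSubgroup) := by
  ext x
  constructor
  · rintro ⟨y, ⟨z, rfl⟩, rfl⟩
    exact ⟨B *ᵥ z, ⟨z, rfl⟩, (cast_mulVec B z).symm⟩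
  · rintro ⟨y, ⟨z, rfl⟩, rfl⟩
    exact ⟨castHom n z, ⟨z, rfl⟩, cast_mulVec B z⟩

lemma relindex_intMatrix (B : Matrix (Fin n) (Fin n) ℤ) (hB : B.det ≠ 0) :
    ((P n).map (T (B.map (Int.cast : ℤ → ℚ)))).relIndex (P n) = B.det.natAbs := by
  rw [map_T_int_eq, P_eq_map_top,
    relindex_map_of_injective _ (castHom_injective n),
    AddSubgroup.relIndex_top_right]
  exact index_range_mulVecLin B hB

/-! ### scalar matrices -/

noncomputable abbrev S (n : ℕ) (q : ℚ) : Matrix (Fin n) (Fin n) ℚ := q • (1 : Matrix (Fin n) (Fin n) ℚ)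

lemma S_mul_S (q r : ℚ) : S n q * S n r = S n (q * r) := by
  rw [smul_mul_smul_comm, one_mul]

lemma S_one : S n 1 = (1 : Matrix (Fin n) (Fin n) ℚ) := one_smul _ _

lemma det_S (q : ℚ) : (S n q).det = q ^ n := by
  rw [det_smul, det_one, mul_one, Fintype.card_fin]

lemma isUnit_det_S {q : ℚ} (hq : q ≠ 0) : IsUnit (S n q).det := by
  rw [det_S]; exact (pow_ne_zero n hq).isUnit

lemma S_int_cast (c : ℤ) :
    (c • (1 : Matrix (Fin n) (Fin n) ℤ)).map (Int.cast : ℤ → ℚ) = S n (c : ℚ) := by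
  ext i j
  simp only [Matrix.map_apply, S, Matrix.smul_apply, smul_eq_mul, Matrix.one_apply]
  by_cases h : i = j <;> simp [h]

lemma T_S_apply (q : ℚ) (x : Fin n → ℚ) : T (S n q) x = q • x := by
  rw [T_apply, smul_mulVec, one_mulVec]

lemma map_T_S_int_le (c : ℤ) (X : AddSubgroup (Fin n → ℚ)) : X.map (T (S n (c : ℚ))) ≤ X := by
  rintro x ⟨y, hy, rfl⟩
  rw [T_S_apply]
  have : (c : ℚ) • y = c • y := by
    rw [Int.cast_smul_eq_zsmul]
  rw [this]
  exact AddSubgroup.zsmul_mem X hy c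

lemma map_T_S_cancel {q : ℚ} (hq : q ≠ 0) (X : AddSubgroup (Fin n → ℚ)) :
    (X.map (T (S n q))).map (T (S n q⁻¹)) = X := by
  rw [← map_T_mul, S_mul_S, inv_mul_cancel₀ hq, S_one, map_T_one]

/-! ### full lattices -/

def Full (X : AddSubgroup (Fin n → ℚ)) : Prop :=
  ∃ c d : ℤ, 0 < c ∧ 0 < d ∧ (P n).map (T (S n (c : ℚ))) ≤ X ∧ X.map (T (S n (d : ℚ))) ≤ P n

lemma full_P : Full (P n) :=
  ⟨1, 1, one_pos, one_pos, by simp [S_one, map_T_one], by simp [S_one, map_T_one]⟩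

lemma map_T_S_P_le {c d : ℤ} (hcd : c ∣ d) :
    (P n).map (T (S n (d : ℚ))) ≤ (P n).map (T (S n (c : ℚ))) := by
  obtain ⟨e, rfl⟩ := hcd
  intro x hx
  have : (((c * e : ℤ) : ℚ)) = (c : ℚ) * (e : ℚ) := by push_cast; ring
  rw [this, ← S_mul_S, map_T_mul] at hx
  exact (AddSubgroup.map_mono (map_T_S_int_le e (P n))) hx

lemma full_relindex_ne_zero {X Y : AddSubgroup (Fin n → ℚ)} (hX : Full X) (hY : Full Y) :
    Y.relIndex X ≠ 0 := by
  obtain ⟨cx, dx, hcx, hdx, hcxle, hdxle⟩ := hX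
  obtain ⟨cy, dy, hcy, hdy, hcyle, hdyle⟩ := hY
  set W := (P n).map (T (S n ((cx * cy : ℤ) : ℚ))) with hW
  have hWX : W ≤ X := le_trans (map_T_S_P_le ⟨cy, rfl⟩) hcxle
  have hWY : W ≤ Y := le_trans (map_T_S_P_le ⟨cx, mul_comm cx cy⟩) hcyle
  set Z := (P n).map (T (S n ((dx : ℚ)⁻¹))) with hZ
  have hdx0 : (dx : ℚ) ≠ 0 := Int.cast_ne_zero.mpr hdx.ne'
  have hXZ : X ≤ Z := by
    rw [hZ, ← map_T_S_cancel hdx0 X]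
    exact AddSubgroup.map_mono hdxle
  have hWZ : W.relIndex Z ≠ 0 := by
    rw [← relindex_map_T (isUnit_det_S hdx0) W Z]
    have h1 : Z.map (T (S n (dx : ℚ))) = P n := by
      rw [hZ, ← map_T_mul, S_mul_S, mul_inv_cancel₀ hdx0, S_one, map_T_one]
    have h2 : W.map (T (S n (dx : ℚ))) = (P n).map (T (S n ((dx * (cx * cy) : ℤ) : ℚ))) := by
      rw [hW, ← map_T_mul, S_mul_S]
      push_cast
      ring_nf
    rw [h1, h2, ← S_int_cast, relindex_intMatrix]
    · simp only [ne_eq, Int.natAbs_eq_zero, det_smul, det_one, mul_one]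
      positivity
    · simp only [det_smul, det_one, mul_one, Fintype.card_fin]
      positivity
  have hWXne : W.relIndex X ≠ 0 := by
    intro h0
    rw [← AddSubgroup.relIndex_mul_relIndex W X Z hWX hXZ, h0, zero_mul] at hWZ
    exact hWZ rfl
  rw [← AddSubgroup.inf_relIndex_right Y X]
  intro h0
  apply hWXne
  have := AddSubgroup.relIndex_dvd_of_le_left (L := X) (le_inf hWY hWX)
  rw [h0] at this
  exact Nat.eq_zero_of_zero_dvd this

lemma full_scal {c : ℤ} (hc : 0 < c) : Full ((P n).map (T (S n (c : ℚ)))) :=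
  ⟨c, 1, hc, one_pos, le_refl _, by
    rw [Int.cast_one, S_one, map_T_one]
    exact map_T_S_int_le c (P n)⟩

lemma full_inf {X Y : AddSubgroup (Fin n → ℚ)} (hX : Full X) (hY : Full Y) : Full (X ⊓ Y) := by
  obtain ⟨cx, dx, hcx, hdx, hcxle, hdxle⟩ := hX
  obtain ⟨cy, dy, hcy, hdy, hcyle, hdyle⟩ := hY
  refine ⟨cx * cy, dx, by positivity, hdx, ?_, ?_⟩
  · exact le_inf (le_trans (map_T_S_P_le ⟨cy, rfl⟩) hcxle)
      (le_trans (map_T_S_P_le ⟨cx, mul_comm cx cy⟩) hcyle)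
  · exact le_trans (AddSubgroup.map_mono inf_le_left) hdxle

lemma full_sup {X Y : AddSubgroup (Fin n → ℚ)} (hX : Full X) (hY : Full Y) : Full (X ⊔ Y) := by
  obtain ⟨cx, dx, hcx, hdx, hcxle, hdxle⟩ := hX
  obtain ⟨cy, dy, hcy, hdy, hcyle, hdyle⟩ := hY
  refine ⟨cx, dx * dy, hcx, by positivity, le_trans hcxle le_sup_left, ?_⟩
  rw [AddSubgroup.map_sup]
  apply sup_le
  · have : ((dx * dy : ℤ) : ℚ) = (dy : ℚ) * (dx : ℚ) := by push_cast; ring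
    rw [this, ← S_mul_S, map_T_mul]
    exact le_trans (map_T_S_int_le dy _) hdxle
  · have : ((dx * dy : ℤ) : ℚ) = (dx : ℚ) * (dy : ℚ) := by push_cast; ring
    rw [this, ← S_mul_S, map_T_mul]
    exact le_trans (map_T_S_int_le dx _) hdyle

lemma exists_denominator (M : Matrix (Fin n) (Fin n) ℚ) :
    ∃ d : ℤ, 0 < d ∧ ∃ B : Matrix (Fin n) (Fin n) ℤ, B.map (Int.cast : ℤ → ℚ) = (d : ℚ) • M := by
  refine ⟨∏ p : Fin n × Fin n, ((M p.1 p.2).den : ℤ), by positivity,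
    fun i j => (∏ p : Fin n × Fin n, ((M p.1 p.2).den : ℤ)) / (M i j).den * (M i j).num, ?_⟩
  ext i j
  obtain ⟨e, he⟩ : ((M i j).den : ℤ) ∣ ∏ p : Fin n × Fin n, ((M p.1 p.2).den : ℤ) :=
    Finset.dvd_prod_of_mem _ (Finset.mem_univ (i, j))
  have hden : ((M i j).den : ℤ) ≠ 0 := Int.natCast_ne_zero.mpr (M i j).den_nz
  show (((∏ p : Fin n × Fin n, ((M p.1 p.2).den : ℤ)) / (M i j).den * (M i j).num : ℤ) : ℚ) =
    ((∏ p : Fin n × Fin n, ((M p.1 p.2).den : ℤ) : ℤ) : ℚ) * M i j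
  rw [he,
    Int.mul_ediv_cancel_left _ hden]
  have hnum : ((M i j).den : ℚ) * M i j = ((M i j).num : ℚ) := by
    have hden' : ((M i j).den : ℚ) ≠ 0 := by exact_mod_cast hden
    rw [mul_comm, ← eq_div_iff hden']
    exact (Rat.num_div_den (M i j)).symm
  push_cast
  linear_combination (-(e : ℚ)) * hnum

lemma scal_mul_comm (q : ℚ) (M : Matrix (Fin n) (Fin n) ℚ) : S n q * M = M * S n q := by
  rw [smul_mul_assoc, one_mul, mul_smul_comm, mul_one]

lemma full_map {M : Matrix (Fin n) (Fin n) ℚ} (hM : IsUnit M.det)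
    {X : AddSubgroup (Fin n → ℚ)} (hX : Full X) : Full (X.map (T M)) := by
  obtain ⟨d₁, hd₁, B₁, hB₁⟩ := exists_denominator M
  obtain ⟨d₂, hd₂, B₂, hB₂⟩ := exists_denominator M⁻¹
  obtain ⟨cx, dx, hcx, hdx, hcxle, hdxle⟩ := hX
  refine ⟨cx * d₂, dx * d₁, by positivity, by positivity, ?_, ?_⟩
  · have key : S n ((d₂ : ℚ)) = M * (B₂.map (Int.cast : ℤ → ℚ)) := by
      rw [hB₂, mul_smul_comm, Matrix.mul_nonsing_inv M hM]
    have hc : ((cx * d₂ : ℤ) : ℚ) = (cx : ℚ) * (d₂ : ℚ) := by push_cast; ring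
    calc (P n).map (T (S n ((cx * d₂ : ℤ) : ℚ)))
        = (P n).map (T (S n (cx : ℚ) * S n (d₂ : ℚ))) := by rw [S_mul_S, hc]
      _ = ((P n).map (T (S n (d₂ : ℚ)))).map (T (S n (cx : ℚ))) := map_T_mul _ _ _
      _ ≤ ((P n).map (T M)).map (T (S n (cx : ℚ))) := AddSubgroup.map_mono (by
            rw [key, map_T_mul]
            exact AddSubgroup.map_mono (map_T_int_le B₂))
      _ = ((P n).map (T (S n (cx : ℚ)))).map (T M) := by
            rw [← map_T_mul, scal_mul_comm, map_T_mul]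
      _ ≤ X.map (T M) := AddSubgroup.map_mono hcxle
  · have key : S n ((dx * d₁ : ℤ) : ℚ) * M = (B₁.map (Int.cast : ℤ → ℚ)) * S n (dx : ℚ) := by
      rw [hB₁, smul_mul_assoc, one_mul, mul_smul_comm, mul_one, smul_smul]
      congr 1
      push_cast
      ring
    calc (X.map (T M)).map (T (S n ((dx * d₁ : ℤ) : ℚ)))
        = X.map (T (S n ((dx * d₁ : ℤ) : ℚ) * M)) := (map_T_mul _ _ _).symm
      _ = X.map (T ((B₁.map (Int.cast : ℤ → ℚ)) * S n (dx : ℚ))) := by rw [key]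
      _ = (X.map (T (S n (dx : ℚ)))).map (T (B₁.map (Int.cast : ℤ → ℚ))) := map_T_mul _ _ _
      _ ≤ (P n).map (T (B₁.map (Int.cast : ℤ → ℚ))) := AddSubgroup.map_mono hdxle
      _ ≤ P n := map_T_int_le B₁

/-! ### the generalized index chi -/

noncomputable def chi (X Y : AddSubgroup (Fin n → ℚ)) : ℚ :=
  (Y.relIndex X : ℚ) / (X.relIndex Y : ℚ)

lemma chi_ne_zero {X Y : AddSubgroup (Fin n → ℚ)} (hX : Full X) (hY : Full Y) : chi X Y ≠ 0 :=
  div_ne_zero (Nat.cast_ne_zero.mpr (full_relindex_ne_zero hX hY))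
    (Nat.cast_ne_zero.mpr (full_relindex_ne_zero hY hX))

lemma chi_of_le {X Y : AddSubgroup (Fin n → ℚ)} (hYX : Y ≤ X) :
    chi X Y = (Y.relIndex X : ℚ) := by
  have h1 : X.relIndex Y = 1 := by
    have : X ⊓ Y = Y := inf_eq_right.mpr hYX
    rw [← AddSubgroup.inf_relIndex_right X Y, this, AddSubgroup.relIndex_self]
  rw [chi, h1, Nat.cast_one, div_one]

lemma chi_map {M : Matrix (Fin n) (Fin n) ℚ} (hM : IsUnit M.det)
    (X Y : AddSubgroup (Fin n → ℚ)) :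
    chi (X.map (T M)) (Y.map (T M)) = chi X Y := by
  rw [chi, chi, relindex_map_T hM, relindex_map_T hM]

lemma chi_eq_div {W X Y : AddSubgroup (Fin n → ℚ)} (hW : Full W) (hX : Full X) (hY : Full Y)
    (hWX : W ≤ X) (hWY : W ≤ Y) :
    chi X Y = (W.relIndex X : ℚ) / (W.relIndex Y : ℚ) := by
  have hXY : Full (X ⊓ Y) := full_inf hX hY
  have h1 := AddSubgroup.relIndex_mul_relIndex W (X ⊓ Y) X (le_inf hWX hWY) inf_le_left
  have h2 := AddSubgroup.relIndex_mul_relIndex W (X ⊓ Y) Y (le_inf hWX hWY) inf_le_right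
  have e1 : (X ⊓ Y).relIndex X = Y.relIndex X := by
    rw [inf_comm]; exact AddSubgroup.inf_relIndex_right Y X
  have e2 : (X ⊓ Y).relIndex Y = X.relIndex Y := AddSubgroup.inf_relIndex_right X Y
  have hc : (W.relIndex (X ⊓ Y) : ℚ) ≠ 0 :=
    Nat.cast_ne_zero.mpr (full_relindex_ne_zero hXY hW)
  rw [chi, ← h1, ← h2, e1, e2]
  push_cast
  rw [mul_div_mul_left _ _ hc]

lemma chi_mul {X Y Z : AddSubgroup (Fin n → ℚ)} (hX : Full X) (hY : Full Y) (hZ : Full Z) :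
    chi X Y * chi Y Z = chi X Z := by
  obtain ⟨c, d, hc, hd, hlow, hup⟩ := full_inf hX (full_inf hY hZ)
  set W := (P n).map (T (S n (c : ℚ))) with hWdef
  have hWfull : Full W := full_scal hc
  have hWX : W ≤ X := hlow.trans inf_le_left
  have hWY : W ≤ Y := hlow.trans (inf_le_right.trans inf_le_left)
  have hWZ : W ≤ Z := hlow.trans (inf_le_right.trans inf_le_right)
  rw [chi_eq_div hWfull hX hY hWX hWY, chi_eq_div hWfull hY hZ hWY hWZ,
    chi_eq_div hWfull hX hZ hWX hWZ]
  have hWYne : (W.relIndex Y : ℚ) ≠ 0 :=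
    Nat.cast_ne_zero.mpr (full_relindex_ne_zero hY hWfull)
  field_simp

lemma chi_inv {X Y : AddSubgroup (Fin n → ℚ)} (hX : Full X) (hY : Full Y) :
    chi X Y * chi Y X = 1 := by
  rw [chi_mul hX hY hX, chi, AddSubgroup.relIndex_self, Nat.cast_one, div_one]

lemma chi_self (X : AddSubgroup (Fin n → ℚ)) : chi X X = 1 := by
  rw [chi, AddSubgroup.relIndex_self, Nat.cast_one, div_one]

lemma chidet_int (B : Matrix (Fin n) (Fin n) ℤ) (hB : B.det ≠ 0) :
    chi (P n) ((P n).map (T (B.map (Int.cast : ℤ → ℚ)))) = (B.det.natAbs : ℚ) := by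
  rw [chi_of_le (map_T_int_le B), relindex_intMatrix B hB]

lemma full_map_P {M : Matrix (Fin n) (Fin n) ℚ} (hM : IsUnit M.det) :
    Full ((P n).map (T M)) := full_map hM full_P

lemma chi_X_map {M : Matrix (Fin n) (Fin n) ℚ} (hM : IsUnit M.det)
    {X : AddSubgroup (Fin n → ℚ)} (hX : Full X) :
    chi X (X.map (T M)) = chi (P n) ((P n).map (T M)) := by
  have hMX : Full (X.map (T M)) := full_map hM hX
  have hMP : Full ((P n).map (T M)) := full_map_P hM
  have e1 : chi X (P n) * chi (P n) (X.map (T M)) = chi X (X.map (T M)) :=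
    chi_mul hX full_P hMX
  have e2 : chi (P n) ((P n).map (T M)) * chi ((P n).map (T M)) (X.map (T M)) =
      chi (P n) (X.map (T M)) := chi_mul full_P hMP hMX
  have e3 : chi ((P n).map (T M)) (X.map (T M)) = chi (P n) X := chi_map hM _ _
  have e4 : chi X (P n) * chi (P n) X = 1 := chi_inv hX full_P
  calc chi X (X.map (T M)) = chi X (P n) * (chi (P n) ((P n).map (T M)) * chi (P n) X) := by
        rw [← e1, ← e2, e3]
      _ = chi (P n) ((P n).map (T M)) * (chi X (P n) * chi (P n) X) := by ring
      _ = chi (P n) ((P n).map (T M)) := by rw [e4, mul_one]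

lemma chi_P_mul {M N : Matrix (Fin n) (Fin n) ℚ} (hM : IsUnit M.det) (hN : IsUnit N.det) :
    chi (P n) ((P n).map (T (M * N))) =
      chi (P n) ((P n).map (T M)) * chi (P n) ((P n).map (T N)) := by
  rw [map_T_mul]
  have h := chi_mul (X := P n) (Y := (P n).map (T M)) (Z := ((P n).map (T N)).map (T M))
    full_P (full_map_P hM) (full_map hM (full_map_P hN))
  rw [← h, chi_map hM]

lemma chidet {M : Matrix (Fin n) (Fin n) ℚ} (hM : IsUnit M.det)
    {X : AddSubgroup (Fin n → ℚ)} (hX : Full X) :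
    chi X (X.map (T M)) = |M.det| := by
  rw [chi_X_map hM hX]
  obtain ⟨d, hd, B, hB⟩ := exists_denominator M
  have hd0 : (d : ℚ) ≠ 0 := Int.cast_ne_zero.mpr hd.ne'
  have hdpos : (0 : ℚ) < (d : ℚ) := by exact_mod_cast hd
  have hdetB : (B.det : ℚ) = (d : ℚ) ^ n * M.det := by
    have h1 := RingHom.map_det (Int.castRingHom ℚ) B
    rw [RingHom.mapMatrix_apply] at h1
    have h2 : B.map (Int.castRingHom ℚ) = (d : ℚ) • M := hB
    rw [h2, det_smul, Fintype.card_fin] at h1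
    exact_mod_cast h1
  have hBdet0 : B.det ≠ 0 := by
    intro h0
    rw [h0, Int.cast_zero] at hdetB
    have hMdet : M.det ≠ 0 := hM.ne_zero
    have : (d : ℚ) ^ n ≠ 0 := pow_ne_zero _ hd0
    exact hMdet (by
      rcases mul_eq_zero.mp hdetB.symm with h | h
      · exact absurd h this
      · exact h)
  have hSd : IsUnit (S n (d : ℚ)).det := isUnit_det_S hd0
  have key : chi (P n) ((P n).map (T M)) * chi (P n) ((P n).map (T (S n (d : ℚ)))) =
      (B.det.natAbs : ℚ) := by
    rw [← chi_P_mul hM hSd]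
    have hMS : M * S n (d : ℚ) = B.map (Int.cast : ℤ → ℚ) := by
      rw [hB, mul_smul_comm, mul_one]
    rw [hMS, chidet_int B hBdet0]
  have hSdval : chi (P n) ((P n).map (T (S n (d : ℚ)))) = (d : ℚ) ^ n := by
    have h3 := chidet_int (d • (1 : Matrix (Fin n) (Fin n) ℤ))
      (by rw [det_smul, det_one, mul_one, Fintype.card_fin]; positivity)
    rw [S_int_cast] at h3
    rw [h3, Nat.cast_natAbs, Int.cast_abs]
    rw [det_smul, det_one, mul_one, Fintype.card_fin]
    push_cast
    rw [abs_pow, abs_of_pos hdpos]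
  have hval : ((B.det.natAbs : ℚ)) = (d : ℚ) ^ n * |M.det| := by
    rw [Nat.cast_natAbs, Int.cast_abs, hdetB, abs_mul, abs_pow, abs_of_pos hdpos]
  rw [hSdval, hval] at key
  have hdn : ((d : ℚ) ^ n) ≠ 0 := pow_ne_zero _ hd0
  have key2 : chi (P n) ((P n).map (T M)) * (d : ℚ) ^ n = |M.det| * (d : ℚ) ^ n := by
    rw [key]; ring
  exact mul_right_cancel₀ hdn key2

/-! ### the chain of lattices -/

def Lk (M : Matrix (Fin n) (Fin n) ℚ) : ℕ → AddSubgroup (Fin n → ℚ)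
  | 0 => P n
  | (k+1) => P n ⊔ (Lk M k).map (T M)

lemma Lk_zero (M : Matrix (Fin n) (Fin n) ℚ) : Lk M 0 = P n := rfl

lemma Lk_succ (M : Matrix (Fin n) (Fin n) ℚ) (k : ℕ) :
    Lk M (k + 1) = P n ⊔ (Lk M k).map (T M) := rfl

lemma P_le_Lk (M : Matrix (Fin n) (Fin n) ℚ) (k : ℕ) : P n ≤ Lk M k := by
  cases k with
  | zero => exact le_of_eq (Lk_zero M).symm
  | succ k => rw [Lk_succ]; exact le_sup_left

lemma Lk_le_succ (M : Matrix (Fin n) (Fin n) ℚ) (k : ℕ) : Lk M k ≤ Lk M (k + 1) := by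
  induction k with
  | zero => rw [Lk_zero, Lk_succ, Lk_zero]; exact le_sup_left
  | succ k ih =>
      rw [Lk_succ M (k+1), Lk_succ M k]
      exact sup_le le_sup_left (le_trans (AddSubgroup.map_mono ih) le_sup_right)

lemma Lk_mono (M : Matrix (Fin n) (Fin n) ℚ) : Monotone (Lk M) :=
  monotone_nat_of_le_succ (Lk_le_succ M)

lemma map_pow_P_le (M : Matrix (Fin n) (Fin n) ℚ) (j : ℕ) :
    (P n).map (T (M ^ j)) ≤ Lk M j := by
  induction j with
  | zero => rw [pow_zero, map_T_one, Lk_zero]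
  | succ j ih =>
      rw [pow_succ', map_T_mul, Lk_succ]
      exact le_trans (AddSubgroup.map_mono ih) le_sup_right

lemma Lk_succ_eq (M : Matrix (Fin n) (Fin n) ℚ) (k : ℕ) :
    Lk M (k + 1) = Lk M k ⊔ (P n).map (T (M ^ (k + 1))) := by
  induction k with
  | zero =>
      rw [Lk_succ, Lk_zero, pow_one]
  | succ k ih =>
      calc Lk M (k+1+1) = P n ⊔ (Lk M k ⊔ (P n).map (T (M ^ (k+1)))).map (T M) := by
            rw [Lk_succ, ih]
        _ = (P n ⊔ (Lk M k).map (T M)) ⊔ ((P n).map (T (M ^ (k+1)))).map (T M) := by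
            rw [AddSubgroup.map_sup, sup_assoc]
        _ = Lk M (k+1) ⊔ (P n).map (T (M ^ (k+1+1))) := by
            rw [← map_T_mul, ← pow_succ', Lk_succ]

lemma full_Lk {M : Matrix (Fin n) (Fin n) ℚ} (hM : IsUnit M.det) (k : ℕ) : Full (Lk M k) := by
  induction k with
  | zero => exact full_P
  | succ k ih => exact full_sup full_P (full_map hM ih)

/-! ### relating `intSpan` to the chain -/

def intSpanA (n : ℕ) (M : Matrix (Fin n) (Fin n) ℚ) : AddSubgroup (Fin n → ℚ) :=
  AddSubgroup.closure {x | ∃ (j : ℕ) (z : Fin n → ℤ), x = (M ^ j) *ᵥ fun i => (z i : ℚ)}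

lemma intSpanA_eq (M : Matrix (Fin n) (Fin n) ℚ) : intSpanA n M = ⨆ k, Lk M k := by
  apply le_antisymm
  · rw [intSpanA, AddSubgroup.closure_le]
    rintro x ⟨j, z, rfl⟩
    have hx : ((M ^ j) *ᵥ fun i => (z i : ℚ)) ∈ (P n).map (T (M ^ j)) :=
      ⟨castHom n z, ⟨z, rfl⟩, rfl⟩
    exact SetLike.le_def.mp (le_trans (map_pow_P_le M j) (le_iSup (Lk M) j)) hx
  · apply iSup_le
    intro k
    induction k with
    | zero =>
        rw [Lk_zero]
        intro x hx
        obtain ⟨z, rfl⟩ := hx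
        exact AddSubgroup.subset_closure ⟨0, z, by rw [pow_zero, one_mulVec]; rfl⟩
    | succ k ih =>
        rw [Lk_succ]
        apply sup_le
        · intro x hx
          obtain ⟨z, rfl⟩ := hx
          exact AddSubgroup.subset_closure ⟨0, z, by rw [pow_zero, one_mulVec]; rfl⟩
        · refine le_trans (AddSubgroup.map_mono ih) ?_
          rw [AddSubgroup.map_le_iff_le_comap, intSpanA, AddSubgroup.closure_le]
          rintro x ⟨j, z, rfl⟩
          show T M ((M ^ j) *ᵥ fun i => (z i : ℚ)) ∈ intSpanA n M
          rw [T_apply, mulVec_mulVec, ← pow_succ']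
          exact AddSubgroup.subset_closure ⟨j + 1, z, rfl⟩

lemma map_T_intSpanA (M : Matrix (Fin n) (Fin n) ℚ) :
    (intSpanA n M).map (T M) = ⨆ k, (Lk M k).map (T M) := by
  rw [intSpanA_eq, AddSubgroup.map_iSup]

lemma intSpanA_eq_P_sup (M : Matrix (Fin n) (Fin n) ℚ) :
    intSpanA n M = P n ⊔ (intSpanA n M).map (T M) := by
  rw [map_T_intSpanA, intSpanA_eq]
  rw [sup_iSup]
  apply le_antisymm
  · exact iSup_le fun k => le_trans (Lk_le_succ M k) (le_iSup (fun k => P n ⊔ (Lk M k).map (T M)) k)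
  · exact iSup_le fun k => (le_iSup (Lk M) (k + 1) : Lk M (k+1) ≤ _)

/-! ### stabilization -/

lemma stab (M : Matrix (Fin n) (Fin n) ℚ) :
    ∃ K : ℕ, ∀ k, K ≤ k →
      P n ⊓ ((intSpanA n M).map (T M)) = P n ⊓ ((Lk M k).map (T M)) := by
  have hmono : Monotone (fun k => P n ⊓ ((Lk M k).map (T M))) := fun i j hij =>
    inf_le_inf_left _ (AddSubgroup.map_mono (Lk_mono M hij))
  set C : ℕ →o Submodule ℤ (Fin n → ℤ) :=
    ⟨fun k => AddSubgroup.toIntSubmodule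
      (AddSubgroup.comap (castHom n) (P n ⊓ ((Lk M k).map (T M)))),
     fun i j hij => by
        simp only
        exact AddSubgroup.comap_mono (hmono hij)⟩ with hC
  obtain ⟨K, hK⟩ := monotone_stabilizes_iff_noetherian.mpr
    (inferInstance : IsNoetherian ℤ (Fin n → ℤ)) C
  have hrec : ∀ k, AddSubgroup.map (castHom n)
      (AddSubgroup.comap (castHom n) (P n ⊓ ((Lk M k).map (T M)))) =
      P n ⊓ ((Lk M k).map (T M)) :=
    fun k => AddSubgroup.map_comap_eq_self (le_trans inf_le_left le_rfl)
  have hstep : ∀ k, K ≤ k → P n ⊓ ((Lk M K).map (T M)) = P n ⊓ ((Lk M k).map (T M)) := by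
    intro k hk
    have := hK k hk
    have h2 : AddSubgroup.comap (castHom n) (P n ⊓ ((Lk M K).map (T M))) =
        AddSubgroup.comap (castHom n) (P n ⊓ ((Lk M k).map (T M))) := by
      have h3 := congrArg (AddSubgroup.toIntSubmodule (M := Fin n → ℤ)).symm this
      exact h3
    rw [← hrec K, ← hrec k, h2]
  have hmain : P n ⊓ ((intSpanA n M).map (T M)) = P n ⊓ ((Lk M K).map (T M)) := by
    apply le_antisymm
    · rintro x ⟨hxP, hxT⟩
      rw [map_T_intSpanA] at hxT
      have hdir : Directed (· ≤ ·) (fun k => (Lk M k).map (T M)) :=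
        (Monotone.directed_le fun i j hij => AddSubgroup.map_mono (Lk_mono M hij))
      obtain ⟨j, hj⟩ := (AddSubgroup.mem_iSup_of_directed hdir).mp hxT
      have : x ∈ P n ⊓ ((Lk M (max K j)).map (T M)) :=
        ⟨hxP, AddSubgroup.map_mono (Lk_mono M (le_max_right K j)) hj⟩
      rw [← hstep (max K j) (le_max_left K j)] at this
      exact this
    · exact inf_le_inf_left _ (AddSubgroup.map_mono (by
        rw [intSpanA_eq]; exact le_iSup (Lk M) K))
  exact ⟨K, fun k hk => by rw [hmain, hstep k hk]⟩

/-! ### reduction of the index to the finite chain -/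

noncomputable def idxA (n : ℕ) (M : Matrix (Fin n) (Fin n) ℚ) : ℕ :=
  ((intSpanA n M).map (Matrix.mulVecLin M).toAddMonoidHom).relIndex (intSpanA n M)

lemma idxA_eq (M : Matrix (Fin n) (Fin n) ℚ) :
    ∃ K : ℕ, ∀ k, K ≤ k →
      idxA n M = ((Lk M k).map (T M)).relIndex (Lk M (k + 1)) := by
  obtain ⟨K, hK⟩ := stab M
  refine ⟨K, fun k hk => ?_⟩
  calc idxA n M = ((intSpanA n M).map (T M)).relIndex (P n ⊔ (intSpanA n M).map (T M)) := by
        rw [← intSpanA_eq_P_sup]; rfl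
    _ = ((intSpanA n M).map (T M)).relIndex (P n) := AddSubgroup.relIndex_sup_right _ _
    _ = (P n ⊓ (intSpanA n M).map (T M)).relIndex (P n) :=
        (AddSubgroup.inf_relIndex_left _ _).symm
    _ = (P n ⊓ (Lk M k).map (T M)).relIndex (P n) := by rw [hK k hk]
    _ = ((Lk M k).map (T M)).relIndex (P n) := AddSubgroup.inf_relIndex_left _ _
    _ = ((Lk M k).map (T M)).relIndex (P n ⊔ (Lk M k).map (T M)) :=
        (AddSubgroup.relIndex_sup_right _ _).symm
    _ = ((Lk M k).map (T M)).relIndex (Lk M (k + 1)) := by rw [← Lk_succ]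

/-! ### the shift identity -/

lemma shift0 {A : Matrix (Fin n) (Fin n) ℚ} (hA : IsUnit A.det) (k : ℕ) :
    (Lk A⁻¹ k).map (T (A ^ k)) = Lk A k := by
  induction k with
  | zero => rw [pow_zero, map_T_one, Lk_zero, Lk_zero]
  | succ k ih =>
      rw [Lk_succ A⁻¹ k, AddSubgroup.map_sup]
      have h1 : ((Lk A⁻¹ k).map (T A⁻¹)).map (T (A ^ (k+1))) = Lk A k := by
        rw [← map_T_mul]
        have : A ^ (k + 1) * A⁻¹ = A ^ k := by
          rw [pow_succ, mul_assoc, Matrix.mul_nonsing_inv A hA, mul_one]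
        rw [this, ih]
      rw [h1, Lk_succ_eq A k, sup_comm]

lemma main {A : Matrix (Fin n) (Fin n) ℚ} (hA : IsUnit A.det) :
    idxA n A ≠ 0 ∧ idxA n A⁻¹ ≠ 0 ∧
      |A.det| = (idxA n A : ℚ) / (idxA n A⁻¹ : ℚ) := by
  have hAi : IsUnit (A⁻¹).det := by
    rw [Matrix.det_nonsing_inv]
    exact isUnit_ringInverse.mpr hA
  obtain ⟨K₁, h₁⟩ := idxA_eq A
  obtain ⟨K₂, h₂⟩ := idxA_eq A⁻¹
  set k := max K₁ K₂ with hk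
  have ha : idxA n A = ((Lk A k).map (T A)).relIndex (Lk A (k + 1)) :=
    h₁ k (le_max_left _ _)
  have hpow : IsUnit ((A ^ (k+1)).det) := by rw [det_pow]; exact hA.pow _
  have hb : idxA n A⁻¹ = (Lk A k).relIndex (Lk A (k + 1)) := by
    rw [h₂ k (le_max_right _ _), ← relindex_map_T hpow]
    have e1 : ((Lk A⁻¹ k).map (T A⁻¹)).map (T (A ^ (k+1))) = Lk A k := by
      rw [← map_T_mul]
      have : A ^ (k + 1) * A⁻¹ = A ^ k := by
        rw [pow_succ, mul_assoc, Matrix.mul_nonsing_inv A hA, mul_one]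
      rw [this, shift0 hA]
    rw [e1, shift0 hA]
  have F3 : Full (Lk A k) := full_Lk hA k
  have F1 : Full (Lk A (k + 1)) := full_Lk hA (k + 1)
  have F2 : Full ((Lk A k).map (T A)) := full_map hA F3
  have hle : (Lk A k).map (T A) ≤ Lk A (k + 1) := by rw [Lk_succ]; exact le_sup_right
  have cha : chi (Lk A (k + 1)) ((Lk A k).map (T A)) = (idxA n A : ℚ) := by
    rw [chi_of_le hle, ha]
  have chb : chi (Lk A (k + 1)) (Lk A k) = (idxA n A⁻¹ : ℚ) := by
    rw [chi_of_le (Lk_le_succ A k), hb]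
  have chm := chi_mul F1 F3 F2
  have chd : chi (Lk A k) ((Lk A k).map (T A)) = |A.det| := chidet hA F3
  rw [cha, chb, chd] at chm
  have hane : idxA n A ≠ 0 := by
    rw [ha]
    exact full_relindex_ne_zero F1 F2
  have hbne : idxA n A⁻¹ ≠ 0 := by
    rw [hb]
    exact full_relindex_ne_zero F1 F3
  refine ⟨hane, hbne, ?_⟩
  have hbQ : (idxA n A⁻¹ : ℚ) ≠ 0 := Nat.cast_ne_zero.mpr hbne
  rw [eq_div_iff hbQ]
  linear_combination chm

end IdxAux


lemma idx_eq_idxA (n : ℕ) (M : Matrix (Fin n) (Fin n) ℚ) : idx n M = IdxAux.idxA n M := rfl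

theorem stmt1 (n : ℕ) (A : Matrix (Fin n) (Fin n) ℚ) (hA : IsUnit A.det) :
    idx n A ≠ 0 ∧ idx n A⁻¹ ≠ 0 ∧
      |A.det| = (idx n A : ℚ) / (idx n A⁻¹ : ℚ) := by
  rw [idx_eq_idxA, idx_eq_idxA]
  exact IdxAux.main hA
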